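/- arXiv:2603.27149 — 2 statements merged into one kernel-verified Lean document; each statement's English description precedes it below -/
import Mathlib

section
/- Let U ⊆ V ⊆ R^d be ℤ^n-graded submodules, let h_1,…,h_t ∈ V be homogeneous elements whose images h_1+U,…,h_t+U generate V/U, and let S ⊆ ⊕_{i=1}^t Σ^{deg h_i} R be a homogeneous generating set of the syzygy module Syz(H) := ker(ψ : ⊕_{i=1}^t Σ^{deg h_i} R → V/U, e_i ↦ h_i + U). Then {h_1+U,…,h_t+U} is a minimal generating set of V/U if and only if no element of S has a constant module term, i.e., no s = Σ_i s_i e_i ∈ S has a nonzero constant coefficient (coefficient of the monomial 1) in some entry s_i ∈ R. Equivalently, if A is the matrix whose columns are the elements of S, then {h_1+U,…,h_t+U} is minimal if and only if no nonzero constant of k appears as an entry of A. -/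
noncomputable section

/-- The free module `R^d` over `R = k[X_1, …, X_n]`. -/
abbrev FreeMod (k : Type*) [Field k] (n d : ℕ) := Fin d → MvPolynomial (Fin n) k

variable {k : Type*} [Field k] {n d : ℕ}

/-- The map `R^t → R^d`, `v ↦ ∑ i, v i • h i`. -/
def combMap {t : ℕ} (h : Fin t → FreeMod k n d) :
    FreeMod k n t →ₗ[MvPolynomial (Fin n) k] FreeMod k n d where
  toFun v := ∑ i, v i • h i
  map_add' v w := by simp [add_smul, Finset.sum_add_distrib]
  map_smul' c v := by simp [Finset.smul_sum, smul_smul]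

end

/-- **Pruning minimality criterion** (relative version).  Let `U ⊆ V ⊆ R^d` be `ℤ^n`-graded
submodules, `h_1, …, h_t ∈ V` homogeneous elements (of degrees `deg i`) whose images
generate `V/U`, and `S` a homogeneous generating set of the syzygy module
`Syz(H) = ker(⊕_i Σ^{deg h_i} R → V/U)`.  Then `{h_1 + U, …, h_t + U}` is a minimal
generating set of `V/U` iff no element of `S` has a nonzero constant coefficient in any
entry. -/
theorem pruning_minimality_criterion {k : Type*} [Field k] {n d t : ℕ}
    (U V : Submodule (MvPolynomial (Fin n) k) (FreeMod k n d)) (hUV : U ≤ V)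
    (hUgr : ∀ f ∈ U, ∀ β : Fin n →₀ ℕ,
      (fun c => MvPolynomial.monomial β ((f c).coeff β)) ∈ U)
    (hVgr : ∀ f ∈ V, ∀ β : Fin n →₀ ℕ,
      (fun c => MvPolynomial.monomial β ((f c).coeff β)) ∈ V)
    (h : Fin t → FreeMod k n d) (hmem : ∀ i, h i ∈ V)
    (deg : Fin t → (Fin n →₀ ℕ))
    (hhom : ∀ i, ∀ c : Fin d, ∀ m ∈ ((h i) c).support, m = deg i)
    (hgen : Submodule.span (MvPolynomial (Fin n) k)
        (Set.range fun i => U.mkQ (h i)) = V.map U.mkQ)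
    (S : Set (FreeMod k n t))
    (hS : Submodule.span (MvPolynomial (Fin n) k) S = Submodule.comap (combMap h) U)
    (hShom : ∀ s ∈ S, ∃ γ : Fin n →₀ ℕ, ∀ i, ∀ m ∈ (s i).support, m + deg i = γ) :
    (∀ i, U.mkQ (h i) ∉ Submodule.span (MvPolynomial (Fin n) k)
        {x | ∃ j, j ≠ i ∧ x = U.mkQ (h j)}) ↔
      ∀ s ∈ S, ∀ i, (s i).coeff 0 = 0 := by
  classical
  constructor
  · -- minimal → no constant coefficients
    intro hmin s hsS i
    by_contra hc0
    set c := (s i).coeff 0 with hc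
    have hsyz : (combMap h) s ∈ U := by
      have hmem' : s ∈ Submodule.span (MvPolynomial (Fin n) k) S :=
        Submodule.subset_span hsS
      rw [hS] at hmem'
      exact hmem'
    obtain ⟨γ, hγ⟩ := hShom s hsS
    have hγi : γ = deg i := by
      have := hγ i 0 (by simpa [MvPolynomial.mem_support_iff] using hc0)
      simpa using this.symm
    -- s i is the constant c
    have hsi : s i = MvPolynomial.C c := by
      ext m
      rw [MvPolynomial.coeff_C]
      by_cases hm : m = 0
      · simp [hm, hc]
      · have hns : m ∉ (s i).support := by
          intro hmem''
          have h1 := hγ i m hmem''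
          rw [hγi] at h1
          apply hm
          have : m + deg i = 0 + deg i := by simpa using h1
          exact add_right_cancel this
        rw [MvPolynomial.notMem_support_iff.mp hns]
        simp [Ne.symm hm]
    -- the sum relation in the quotient
    have hsum : ∑ j, s j • U.mkQ (h j) = 0 := by
      have h0 : U.mkQ (∑ j, s j • h j) = 0 := by
        rw [Submodule.mkQ_apply, Submodule.Quotient.mk_eq_zero]
        simpa [combMap] using hsyz
      simpa [map_sum] using h0
    have hsplit : (MvPolynomial.C c : MvPolynomial (Fin n) k) • U.mkQ (h i)
        + ∑ j ∈ Finset.univ.erase i, s j • U.mkQ (h j) = 0 := by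
      rw [← hsi,
        Finset.add_sum_erase Finset.univ (fun j => s j • U.mkQ (h j)) (Finset.mem_univ i)]
      exact hsum
    have hCinv : (MvPolynomial.C (c⁻¹) * MvPolynomial.C c : MvPolynomial (Fin n) k) = 1 := by
      rw [← MvPolynomial.C_mul, inv_mul_cancel₀ hc0, MvPolynomial.C_1]
    have key : U.mkQ (h i)
        = ∑ j ∈ Finset.univ.erase i, (MvPolynomial.C (c⁻¹) * (- s j)) • U.mkQ (h j) := by
      have h1 : (MvPolynomial.C c : MvPolynomial (Fin n) k) • U.mkQ (h i)
          = ∑ j ∈ Finset.univ.erase i, (- s j) • U.mkQ (h j) := by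
        have h2 := eq_neg_of_add_eq_zero_left hsplit
        rw [h2, ← Finset.sum_neg_distrib]
        simp [neg_smul]
      calc U.mkQ (h i)
          = ((MvPolynomial.C (c⁻¹) * MvPolynomial.C c : MvPolynomial (Fin n) k)) • U.mkQ (h i) := by
            rw [hCinv, one_smul]
        _ = (MvPolynomial.C (c⁻¹) : MvPolynomial (Fin n) k)
              • (MvPolynomial.C c • U.mkQ (h i)) := by
            rw [mul_smul]
        _ = _ := by
            rw [h1, Finset.smul_sum]
            exact Finset.sum_congr rfl fun j _ => by rw [smul_smul]
    exact hmin i (key ▸ Submodule.sum_mem _ fun j hj =>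
      Submodule.smul_mem _ _ (Submodule.subset_span
        ⟨j, (Finset.mem_erase.mp hj).1, rfl⟩))
  · -- no constant coefficients → minimal
    intro hB i hi
    -- rewrite the spanning set as a range over a subtype
    have hset : {x | ∃ j, j ≠ i ∧ x = U.mkQ (h j)}
        = Set.range (fun j : {j : Fin t // j ≠ i} => U.mkQ (h (j : Fin t))) := by
      ext x
      constructor
      · rintro ⟨j, hj, rfl⟩; exact ⟨⟨j, hj⟩, rfl⟩
      · rintro ⟨⟨j, hj⟩, rfl⟩; exact ⟨j, hj, rfl⟩
    rw [hset, Submodule.mem_span_range_iff_exists_fun] at hi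
    obtain ⟨c, hc⟩ := hi
    -- the candidate syzygy
    set v : FreeMod k n t := fun j => if hj : j = i then 1 else - c ⟨j, hj⟩ with hv
    have hsub : ∑ j ∈ Finset.univ.erase i, v j • U.mkQ (h j)
        = ∑ j : {j : Fin t // j ≠ i}, (- c j) • U.mkQ (h (j : Fin t)) := by
      rw [Finset.sum_subtype (p := fun j => j ≠ i) _ (fun x => by simp) (fun j => v j • U.mkQ (h j))]
      refine Finset.sum_congr rfl fun j _ => ?_
      simp [hv, j.2]
    have hvU : v ∈ Submodule.comap (combMap h) U := by
      have hq : U.mkQ ((combMap h) v) = 0 := by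
        have : (combMap h) v = ∑ j, v j • h j := rfl
        rw [this, map_sum]
        simp_rw [map_smul]
        rw [← Finset.add_sum_erase _ _ (Finset.mem_univ i), hsub]
        have hvi : v i = 1 := by simp [hv]
        rw [hvi, one_smul]
        rw [show (∑ j : {j : Fin t // j ≠ i}, (- c j) • U.mkQ (h (j : Fin t)))
            = - ∑ j : {j : Fin t // j ≠ i}, c j • U.mkQ (h (j : Fin t)) by
          rw [← Finset.sum_neg_distrib]; simp]
        rw [hc, add_neg_cancel]
      rw [Submodule.mem_comap, ← Submodule.Quotient.mk_eq_zero, ← Submodule.mkQ_apply]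
      exact hq
    -- the submodule of tuples with zero constant coefficients
    let W : Submodule (MvPolynomial (Fin n) k) (FreeMod k n t) :=
      { carrier := {w | ∀ j, (w j).coeff 0 = 0}
        add_mem' := fun {a b} ha hb j => by
          show ((a + b) j).coeff 0 = 0
          simp [Pi.add_apply, MvPolynomial.coeff_add, ha j, hb j]
        zero_mem' := fun j => by simp
        smul_mem' := fun p w hw j => by
          show ((p • w) j).coeff 0 = 0
          have : (p • w) j = p * w j := rfl
          have h2 : ∀ q r : MvPolynomial (Fin n) k,
              MvPolynomial.coeff 0 (q * r)
                = MvPolynomial.coeff 0 q * MvPolynomial.coeff 0 r := fun q r => by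
            have := map_mul (MvPolynomial.constantCoeff (σ := Fin n) (R := k)) q r
            simpa [MvPolynomial.constantCoeff_eq] using this
          rw [this, h2, hw j, mul_zero] }
    have hSW : Submodule.span (MvPolynomial (Fin n) k) S ≤ W :=
      Submodule.span_le.mpr fun s hs j => hB s hs j
    have hvW : v ∈ W := by
      rw [← hS] at hvU
      exact hSW hvU
    have : (v i).coeff 0 = 0 := hvW i
    rw [show v i = 1 by simp [hv]] at this
    simp at this
end

section
/- Let U ⊆ V ⊆ R^d be ℤ^n-graded submodules, let h_1,…,h_t ∈ V be homogeneous elements whose images generate V/U, let S ⊆ ⊕_{i=1}^t Σ^{deg h_i} R be a homogeneous generating set of the syzygy module Syz(H) := ker(e_i ↦ h_i + U), and let A ∈ R^{t×|S|} be the matrix with the elements of S as columns. Let A_0 be the matrix over k obtained from A by taking the constant term of each entry, let r = rank(A_0), and suppose I × J with |I| = |J| = r indexes an invertible r × r submatrix of A_0. Then {h_i + U : i ∉ I} is a minimal generating set of V/U. -/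
lemma combMap_apply {k : Type*} [Field k] {n d t : ℕ} (h : Fin t → FreeMod k n d)
    (q : FreeMod k n t) : combMap h q = ∑ i, q i • h i := rfl

private lemma aux_support_prod {α : Type*} {σ' : Type*} {R : Type*} [CommSemiring R]
    (s : Finset α) (p : α → MvPolynomial σ' R) :
    ∀ x ∈ (∏ i ∈ s, p i).support, ∃ f : α → (σ' →₀ ℕ),
      (∀ i ∈ s, f i ∈ (p i).support) ∧ x = ∑ i ∈ s, f i := by
  classical
  induction s using Finset.induction_on with
  | empty =>
      intro x hx
      rw [Finset.prod_empty] at hx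
      have hx0 : (0 : σ' →₀ ℕ) = x := by
        have := MvPolynomial.mem_support_iff.mp hx
        rw [MvPolynomial.coeff_one] at this
        by_contra h0
        exact this (if_neg h0)
      exact ⟨fun _ => 0, by simp, by simp [← hx0]⟩
  | insert a s' ha ih =>
      intro x hx
      rw [Finset.prod_insert ha] at hx
      have hmem := MvPolynomial.support_mul _ _ hx
      rw [Finset.mem_add] at hmem
      obtain ⟨y, hy, z, hz, hyz⟩ := hmem
      obtain ⟨f, hf, hzf⟩ := ih z hz
      refine ⟨Function.update f a y, ?_, ?_⟩
      · intro i hi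
        rcases Finset.mem_insert.mp hi with rfl | hi'
        · rw [Function.update_self]; exact hy
        · rw [Function.update_of_ne (ne_of_mem_of_not_mem hi' ha)]
          exact hf i hi'
      · rw [Finset.sum_insert ha, Function.update_self]
        have : ∑ i ∈ s', Function.update f a y i = ∑ i ∈ s', f i :=
          Finset.sum_congr rfl fun i hi =>
            Function.update_of_ne (ne_of_mem_of_not_mem hi ha) _ _
        rw [this, ← hzf]
        exact hyz.symm

private lemma aux_support_det {R : Type*} [CommRing R] {σ' : Type*}
    {r : ℕ} (B : Matrix (Fin r) (Fin r) (MvPolynomial σ' R))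
    (D G : Fin r → (σ' →₀ ℕ))
    (hB : ∀ m l, ∀ x ∈ (B m l).support, x + D m = G l) :
    ∀ x ∈ B.det.support, x + ∑ m, D m = ∑ l, G l := by
  classical
  intro x hx
  rw [Matrix.det_apply] at hx
  have h1 := MvPolynomial.support_sum hx
  rw [Finset.mem_biUnion] at h1
  obtain ⟨π, -, hπ⟩ := h1
  rw [Units.smul_def] at hπ
  have hπ' := MvPolynomial.support_smul hπ
  obtain ⟨f, hf, rfl⟩ := aux_support_prod Finset.univ (fun i => B (π i) i) x hπ'
  have e1 : ∑ m, D m = ∑ i, D (π i) := (Equiv.sum_comp π D).symm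
  rw [e1, ← Finset.sum_add_distrib]
  exact Finset.sum_congr rfl fun i _ => hB (π i) i (f i) (hf i (Finset.mem_univ i))

set_option maxHeartbeats 1000000 in
/-- **Pruning minimization.**  Let `U ⊆ V ⊆ R^d` be `ℤ^n`-graded submodules, `h_1, …, h_t`
homogeneous elements of `V` whose images generate `V/U`, and `σ_1, …, σ_N` a homogeneous
generating set of the syzygy module.  Let `A₀` over `k` be the matrix of constant terms of
the syzygy matrix `A = (σ_j i)`, let `r = rank A₀`, and let `I × J` index an invertible
`r × r` submatrix of `A₀`.  Then `{h_i + U : i ∉ I}` is a minimal generating set of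
`V/U`. -/
theorem pruning_minimization {k : Type*} [Field k] {n d t N r : ℕ}
    (U V : Submodule (MvPolynomial (Fin n) k) (FreeMod k n d)) (hUV : U ≤ V)
    (hUgr : ∀ f ∈ U, ∀ β : Fin n →₀ ℕ,
      (fun c => MvPolynomial.monomial β ((f c).coeff β)) ∈ U)
    (hVgr : ∀ f ∈ V, ∀ β : Fin n →₀ ℕ,
      (fun c => MvPolynomial.monomial β ((f c).coeff β)) ∈ V)
    (h : Fin t → FreeMod k n d) (hmem : ∀ i, h i ∈ V)
    (deg : Fin t → (Fin n →₀ ℕ))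
    (hhom : ∀ i, ∀ c : Fin d, ∀ m ∈ ((h i) c).support, m = deg i)
    (hgen : Submodule.span (MvPolynomial (Fin n) k)
        (Set.range fun i => U.mkQ (h i)) = V.map U.mkQ)
    (σ : Fin N → FreeMod k n t)
    (hS : Submodule.span (MvPolynomial (Fin n) k) (Set.range σ)
        = Submodule.comap (combMap h) U)
    (hShom : ∀ j, ∃ γ : Fin n →₀ ℕ, ∀ i, ∀ m ∈ (σ j i).support, m + deg i = γ)
    (A₀ : Matrix (Fin t) (Fin N) k)
    (hA₀ : ∀ i j, A₀ i j = (σ j i).coeff 0)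
    (hrank : A₀.rank = r)
    (eI : Fin r → Fin t) (eJ : Fin r → Fin N)
    (hIinj : Function.Injective eI) (hJinj : Function.Injective eJ)
    (hinv : IsUnit (A₀.submatrix eI eJ).det) :
    Submodule.span (MvPolynomial (Fin n) k)
        {x | ∃ i, i ∉ Set.range eI ∧ x = U.mkQ (h i)} = V.map U.mkQ ∧
      ∀ i, i ∉ Set.range eI →
        U.mkQ (h i) ∉ Submodule.span (MvPolynomial (Fin n) k)
          {x | ∃ j, j ∉ Set.range eI ∧ j ≠ i ∧ x = U.mkQ (h j)} := by
  classical
  -- basic facts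
  have hσU : ∀ j, combMap h (σ j) ∈ U := by
    intro j
    have : σ j ∈ Submodule.span (MvPolynomial (Fin n) k) (Set.range σ) :=
      Submodule.subset_span ⟨j, rfl⟩
    rw [hS] at this
    exact this
  have hrel : ∀ q : Fin t → MvPolynomial (Fin n) k, combMap h q ∈ U →
      ∑ i, q i • U.mkQ (h i) = 0 := by
    intro q hq
    have h0 : U.mkQ (combMap h q) = 0 := by
      rw [Submodule.mkQ_apply, Submodule.Quotient.mk_eq_zero]
      exact hq
    rw [combMap_apply, map_sum] at h0
    simpa [map_smul] using h0
  choose γ hγ using hShom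
  -- the syzygy submatrix `B` over `R`
  set B : Matrix (Fin r) (Fin r) (MvPolynomial (Fin n) k) :=
    fun m l => σ (eJ l) (eI m) with hBdef
  have hdet0 : MvPolynomial.constantCoeff B.det = (A₀.submatrix eI eJ).det := by
    rw [RingHom.map_det]
    congr 1
    ext m l
    simp only [RingHom.mapMatrix_apply, Matrix.map_apply, Matrix.submatrix_apply,
      MvPolynomial.constantCoeff_eq, hBdef]
    exact (hA₀ _ _).symm
  have hdetne : MvPolynomial.constantCoeff B.det ≠ 0 := by
    rw [hdet0]; exact hinv.ne_zero
  have hsupp : ∀ x ∈ B.det.support, x + ∑ m, deg (eI m) = ∑ l, γ (eJ l) :=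
    aux_support_det B (fun m => deg (eI m)) (fun l => γ (eJ l))
      (fun m l x hx => hγ (eJ l) (eI m) x hx)
  have h0mem : (0 : Fin n →₀ ℕ) ∈ B.det.support := by
    rw [MvPolynomial.mem_support_iff, ← MvPolynomial.constantCoeff_eq]
    exact hdetne
  have hDG : ∑ m, deg (eI m) = ∑ l, γ (eJ l) := by
    simpa using hsupp 0 h0mem
  have hsupp0 : B.det.support ⊆ {0} := by
    intro x hx
    have hx' := hsupp x hx
    rw [← hDG] at hx'
    have : x = 0 := add_right_cancel (hx'.trans (zero_add _).symm)
    simp [this]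
  have hdetC : B.det = MvPolynomial.C (MvPolynomial.constantCoeff B.det) := by
    apply MvPolynomial.ext
    intro m
    by_cases hm : m = 0
    · subst hm
      rw [MvPolynomial.coeff_zero_C, MvPolynomial.constantCoeff_eq]
    · rw [MvPolynomial.coeff_C, if_neg (fun e => hm e.symm)]
      refine MvPolynomial.notMem_support_iff.mp fun hmem' => hm ?_
      exact Finset.mem_singleton.mp (hsupp0 hmem')
  have hBunit : IsUnit B.det := by
    rw [hdetC]
    exact (isUnit_iff_ne_zero.mpr hdetne).map (MvPolynomial.C (σ := Fin n) (R := k))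
  -- Part 1 core
  have key : ∀ m0 : Fin r, U.mkQ (h (eI m0)) ∈ Submodule.span (MvPolynomial (Fin n) k)
      {x | ∃ i, i ∉ Set.range eI ∧ x = U.mkQ (h i)} := by
    intro m0
    set v : Fin t → MvPolynomial (Fin n) k :=
      fun i => ∑ l, B⁻¹ l m0 * σ (eJ l) i with hvdef
    have hvU : combMap h v ∈ U := by
      have hv1 : combMap h v = ∑ l, B⁻¹ l m0 • combMap h (σ (eJ l)) := by
        rw [combMap_apply]
        have : ∀ l, B⁻¹ l m0 • combMap h (σ (eJ l))
            = ∑ i, B⁻¹ l m0 • (σ (eJ l) i • h i) := by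
          intro l
          rw [combMap_apply, Finset.smul_sum]
        rw [Finset.sum_congr rfl fun l _ => this l]
        simp only [hvdef, Finset.sum_smul, mul_smul]
        exact Finset.sum_comm ..
      rw [hv1]
      exact Submodule.sum_mem _ fun l _ => U.smul_mem _ (hσU (eJ l))
    have hveI : ∀ m, v (eI m) = if m = m0 then 1 else 0 := by
      intro m
      have e1 : v (eI m) = (B * B⁻¹) m m0 := by
        rw [Matrix.mul_apply]
        exact Finset.sum_congr rfl fun l _ => mul_comm _ _
      rw [e1, Matrix.mul_nonsing_inv B hBunit]
      simp [Matrix.one_apply]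
    have hrel0 := hrel v hvU
    have hsingle : ∑ i, (if i = eI m0 then (1 : MvPolynomial (Fin n) k) else 0) • U.mkQ (h i)
        = U.mkQ (h (eI m0)) := by
      simp [ite_smul]
    have hmain : U.mkQ (h (eI m0)) =
        ∑ i, ((if i = eI m0 then (1 : MvPolynomial (Fin n) k) else 0) - v i) • U.mkQ (h i) := by
      simp only [sub_smul, Finset.sum_sub_distrib, hrel0, sub_zero, hsingle]
    rw [hmain]
    refine Submodule.sum_mem _ fun i _ => ?_
    by_cases hi : i ∈ Set.range eI
    · obtain ⟨m, rfl⟩ := hi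
      have hz : ((if eI m = eI m0 then (1 : MvPolynomial (Fin n) k) else 0) - v (eI m)) = 0 := by
        rw [hveI m]
        by_cases hmm : m = m0
        · simp [hmm]
        · rw [if_neg (fun e => hmm (hIinj e)), if_neg hmm, sub_zero]
      rw [hz, zero_smul]
      exact Submodule.zero_mem _
    · exact Submodule.smul_mem _ _ (Submodule.subset_span ⟨i, hi, rfl⟩)
  constructor
  · -- generation
    apply le_antisymm
    · rw [Submodule.span_le]
      rintro x ⟨i, -, rfl⟩
      exact Submodule.mem_map_of_mem (hmem i)
    · rw [← hgen, Submodule.span_le]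
      rintro x ⟨i, rfl⟩
      by_cases hi : i ∈ Set.range eI
      · obtain ⟨m, rfl⟩ := hi
        exact key m
      · exact Submodule.subset_span ⟨i, hi, rfl⟩
  · -- minimality
    intro i0 hi0 hmemspan
    have hsetimg : {x | ∃ j, j ∉ Set.range eI ∧ j ≠ i0 ∧ x = U.mkQ (h j)} =
        (fun j => U.mkQ (h j)) '' {j | j ∉ Set.range eI ∧ j ≠ i0} := by
      ext x
      constructor
      · rintro ⟨j, hj1, hj2, rfl⟩; exact ⟨j, ⟨hj1, hj2⟩, rfl⟩
      · rintro ⟨j, ⟨hj1, hj2⟩, rfl⟩; exact ⟨j, hj1, hj2, rfl⟩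
    rw [hsetimg, Finsupp.mem_span_image_iff_linearCombination] at hmemspan
    obtain ⟨lc, hlsupp, hlsum⟩ := hmemspan
    rw [Finsupp.mem_supported] at hlsupp
    set p : Fin t → MvPolynomial (Fin n) k := fun j => lc j with hpdef
    have hpI : ∀ m, p (eI m) = 0 := by
      intro m
      by_contra hne
      exact (hlsupp (Finsupp.mem_support_iff.mpr hne)).1 ⟨m, rfl⟩
    have hpi0 : p i0 = 0 := by
      by_contra hne
      exact (hlsupp (Finsupp.mem_support_iff.mpr hne)).2 rfl
    have hlsum' : ∑ j, p j • U.mkQ (h j) = U.mkQ (h i0) := by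
      rw [← hlsum, Finsupp.linearCombination_apply, Finsupp.sum_fintype]
      intro j; simp
    set w : Fin t → MvPolynomial (Fin n) k :=
      fun j => (if j = i0 then (1 : MvPolynomial (Fin n) k) else 0) - p j with hwdef
    have hwU : w ∈ Submodule.comap (combMap h) U := by
      rw [Submodule.mem_comap, ← Submodule.Quotient.mk_eq_zero U, ← Submodule.mkQ_apply]
      have e : U.mkQ (combMap h w) = ∑ j, w j • U.mkQ (h j) := by
        rw [combMap_apply, map_sum]
        exact Finset.sum_congr rfl fun j _ => map_smul _ _ _
      rw [e]
      calc ∑ j, w j • U.mkQ (h j)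
          = (∑ j, (if j = i0 then (1 : MvPolynomial (Fin n) k) else 0) • U.mkQ (h j))
            - ∑ j, p j • U.mkQ (h j) := by
            simp only [hwdef, sub_smul, Finset.sum_sub_distrib]
        _ = U.mkQ (h i0) - U.mkQ (h i0) := by rw [hlsum']; congr 1; simp [ite_smul]
        _ = 0 := sub_self _
    rw [← hS, Submodule.mem_span_range_iff_exists_fun] at hwU
    obtain ⟨q, hq⟩ := hwU
    set q₀ : Fin N → k := fun j => MvPolynomial.constantCoeff (q j) with hq₀def
    set c : Fin t → k := fun i => MvPolynomial.constantCoeff (w i) with hcdef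
    have hc : ∀ i, c i = ∑ j, A₀ i j * q₀ j := by
      intro i
      have hwi : w i = ∑ j, q j * σ j i := by
        rw [← hq]
        simp [Finset.sum_apply]
      show MvPolynomial.constantCoeff (w i) = _
      rw [hwi, map_sum]
      refine Finset.sum_congr rfl fun j _ => ?_
      rw [map_mul, hA₀]
      rw [show (MvPolynomial.constantCoeff (σ j i)) = (σ j i).coeff 0 from
        congrFun MvPolynomial.constantCoeff_eq _]
      exact mul_comm _ _
    have hcI : ∀ m, c (eI m) = 0 := by
      intro m
      show MvPolynomial.constantCoeff (w (eI m)) = 0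
      have hw0 : w (eI m) = 0 := by
        rw [hwdef]
        simp only [hpI m, sub_zero]
        rw [if_neg (fun e => hi0 ⟨m, e⟩)]
      rw [hw0, map_zero]
    have hci0 : c i0 = 1 := by
      show MvPolynomial.constantCoeff (w i0) = 1
      have hw1 : w i0 = 1 := by
        rw [hwdef]
        simp [hpi0]
      rw [hw1, map_one]
    -- linear algebra over k
    set col : Fin r → (Fin t → k) := fun l i => A₀ i (eJ l) with hcoldef
    set M := A₀.submatrix eI eJ with hMdef
    have hMzero : ∀ g : Fin r → k, (∀ m, ∑ l, g l * A₀ (eI m) (eJ l) = 0) → g = 0 := by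
      intro g hg
      have hMg : M.mulVec g = 0 := by
        funext m'
        have e1 : M.mulVec g m' = ∑ l, g l * A₀ (eI m') (eJ l) := by
          simp only [Matrix.mulVec, dotProduct, Matrix.submatrix_apply, hMdef]
          exact Finset.sum_congr rfl fun l _ => mul_comm _ _
        rw [e1]
        exact hg m'
      have e2 : g = M⁻¹.mulVec (M.mulVec g) := by
        rw [Matrix.mulVec_mulVec, Matrix.nonsing_inv_mul M hinv, Matrix.one_mulVec]
      rw [e2, hMg, Matrix.mulVec_zero]
    have hindep : LinearIndependent k col := by
      rw [Fintype.linearIndependent_iff]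
      intro g hg l
      have hg' : ∀ m, ∑ l, g l * A₀ (eI m) (eJ l) = 0 := by
        intro m
        have := congrFun hg (eI m)
        simpa [Finset.sum_apply, hcoldef] using this
      exact congrFun (hMzero g hg') l
    have hspan : Submodule.span k (Set.range col) = LinearMap.range A₀.mulVecLin := by
      have hle : Submodule.span k (Set.range col) ≤ LinearMap.range A₀.mulVecLin := by
        rw [Submodule.span_le]
        rintro x ⟨l, rfl⟩
        refine ⟨Pi.single (eJ l) 1, ?_⟩
        funext i
        simp [Matrix.mulVecLin_apply, Matrix.mulVec, dotProduct, Pi.single_apply,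
          mul_ite, hcoldef]
      have hfr1 : Module.finrank k (LinearMap.range A₀.mulVecLin) = r := hrank
      have hfr2 : Module.finrank k (Submodule.span k (Set.range col)) = r := by
        rw [finrank_span_eq_card hindep, Fintype.card_fin]
      exact Submodule.eq_of_le_of_finrank_le hle (by rw [hfr1, hfr2])
    have hcmem : c ∈ Submodule.span k (Set.range col) := by
      rw [hspan]
      refine ⟨q₀, ?_⟩
      funext i
      rw [Matrix.mulVecLin_apply]
      exact (hc i).symm
    rw [Submodule.mem_span_range_iff_exists_fun] at hcmem
    obtain ⟨g, hg⟩ := hcmem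
    have hg0 : g = 0 := by
      refine hMzero g fun m => ?_
      have := congrFun hg (eI m)
      rw [hcI m] at this
      simpa [Finset.sum_apply, hcoldef] using this
    have hc0 : c i0 = 0 := by
      rw [← congrFun hg i0]
      simp [hg0, Finset.sum_apply]
    rw [hci0] at hc0
    exact one_ne_zero hc0
end
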